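/- For every real β ∈ (0,1] and every integer k ≥ 2, the generalized binomial coefficient satisfies |C(β,k)| ≤ (1 + (β·ln((k+1)/k²) + β − 1)/k)^k. -/

import Mathlib

/-- The generalized binomial coefficient `C(β,k) = β(β−1)⋯(β−k+1)/k!`. -/
noncomputable def genBinom (β : ℝ) (k : ℕ) : ℝ :=
  (∏ j ∈ Finset.range k, (β - j)) / (k.factorial : ℝ)

private lemma log_le_harmonic (n : ℕ) :
    Real.log ((n : ℝ) + 1) ≤ ∑ j ∈ Finset.range n, (1 : ℝ) / (j + 1) := by
  induction n with
  | zero => simp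
  | succ n ih =>
    rw [Finset.sum_range_succ]
    have h1 : Real.log ((n:ℝ) + 1 + 1) =
        Real.log ((n:ℝ) + 1) + Real.log (((n:ℝ)+1+1)/((n:ℝ)+1)) := by
      rw [Real.log_div (by positivity) (by positivity)]; ring
    have h2 : Real.log (((n:ℝ)+1+1)/((n:ℝ)+1)) ≤ 1/((n:ℝ)+1) := by
      have h3 := Real.log_le_sub_one_of_pos (x := ((n:ℝ)+1+1)/((n:ℝ)+1)) (by positivity)
      have h4 : ((n:ℝ)+1+1)/((n:ℝ)+1) - 1 = 1/((n:ℝ)+1) := by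
        field_simp
        ring
      linarith
    push_cast
    linarith

private lemma amgm (n : ℕ) (hn : 0 < n) (a : ℕ → ℝ)
    (ha : ∀ j ∈ Finset.range n, 0 ≤ a j) :
    ∏ j ∈ Finset.range n, a j ≤ ((∑ j ∈ Finset.range n, a j) / n) ^ n := by
  have hn' : (0:ℝ) < n := by exact_mod_cast hn
  have h := Real.geom_mean_le_arith_mean_weighted (Finset.range n)
      (fun _ => (n:ℝ)⁻¹) a (fun _ _ => by positivity)
      (by simp [Finset.sum_const]; field_simp) ha
  have hP : 0 ≤ ∏ j ∈ Finset.range n, a j := Finset.prod_nonneg ha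
  have h2 : (∏ j ∈ Finset.range n, a j) ^ ((n:ℝ)⁻¹) ≤
      (∑ j ∈ Finset.range n, a j) / n := by
    rw [← Real.finset_prod_rpow _ _ ha]
    calc ∏ j ∈ Finset.range n, a j ^ ((n:ℝ)⁻¹)
        ≤ ∑ j ∈ Finset.range n, (n:ℝ)⁻¹ * a j := h
      _ = (∑ j ∈ Finset.range n, a j) / n := by
          rw [← Finset.mul_sum]; ring
  calc ∏ j ∈ Finset.range n, a j
      = ((∏ j ∈ Finset.range n, a j) ^ ((n:ℝ)⁻¹)) ^ n := by
        rw [← Real.rpow_natCast ((∏ j ∈ Finset.range n, a j) ^ ((n:ℝ)⁻¹)) n,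
          ← Real.rpow_mul hP, inv_mul_cancel₀ (ne_of_gt hn'), Real.rpow_one]
    _ ≤ ((∑ j ∈ Finset.range n, a j) / n) ^ n :=
        pow_le_pow_left₀ (Real.rpow_nonneg hP _) h2 n

/-- for `β ∈ (0,1]` and `k ≥ 2`,
`|C(β,k)| ≤ (1 + (β·ln((k+1)/k²) + β − 1)/k)^k`. -/
theorem stmt_3 (β : ℝ) (hβ : β ∈ Set.Ioc (0 : ℝ) 1) (k : ℕ) (hk : 2 ≤ k) :
    |genBinom β k| ≤
      (1 + (β * Real.log (((k : ℝ) + 1) / (k : ℝ) ^ 2) + β - 1) / (k : ℝ)) ^ k := by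
  obtain ⟨hβ0, hβ1⟩ := hβ
  obtain ⟨m, rfl⟩ : ∃ m, k = m + 1 := ⟨k - 1, by omega⟩
  have hm : 1 ≤ m := by omega
  set k := m + 1 with hkdef
  have hk0 : (0:ℝ) < k := by positivity
  -- the factors
  set a : ℕ → ℝ := fun j => if j = 0 then β / k else ((j:ℝ) - β) / j with ha_def
  have ha : ∀ j ∈ Finset.range k, 0 ≤ a j := by
    intro j _
    by_cases hj : j = 0
    · simp [ha_def, hj]; positivity
    · have hj1 : (1:ℝ) ≤ j := by exact_mod_cast Nat.one_le_iff_ne_zero.mpr hj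
      simp only [ha_def, if_neg hj]
      apply div_nonneg (by linarith) (by linarith)
  -- product identity
  have hprodeq : |genBinom β k| = ∏ j ∈ Finset.range k, a j := by
    have h1 : ∏ j ∈ Finset.range k, a j
        = β / k * ∏ j ∈ Finset.range m, (((j:ℝ)+1) - β) / ((j:ℝ)+1) := by
      rw [Finset.prod_range_succ' a m]
      simp only [ha_def, if_pos rfl]
      rw [mul_comm]
      congr 1
      apply Finset.prod_congr rfl
      intro j _
      simp only [if_neg (Nat.succ_ne_zero j)]
      push_cast
      ring_nf
    have h2 : |genBinom β k| = β * (∏ j ∈ Finset.range m, (((j:ℝ)+1) - β)) /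
        (k.factorial : ℝ) := by
      unfold genBinom
      rw [abs_div, Finset.abs_prod, Nat.abs_cast,
        Finset.prod_range_succ' _ m]
      have e1 : ∀ j ∈ Finset.range m, |β - ((j+1:ℕ):ℝ)| = ((j:ℝ)+1) - β := by
        intro j _
        have hj1 : (0:ℝ) ≤ (j:ℝ) := Nat.cast_nonneg j
        rw [abs_of_nonpos (by push_cast; linarith)]
        push_cast; ring
      rw [Finset.prod_congr rfl e1]
      simp [abs_of_pos hβ0]
      try ring
    rw [h1, h2, Finset.prod_div_distrib]
    have h3 : ∏ j ∈ Finset.range m, ((j:ℝ)+1) = (m.factorial : ℝ) := by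
      rw [← Finset.prod_range_add_one_eq_factorial m]
      push_cast; rfl
    have h4 : (k.factorial : ℝ) = (k:ℝ) * (m.factorial : ℝ) := by
      rw [hkdef, Nat.factorial_succ]; push_cast; ring
    rw [h3, h4]
    have hmf : (0:ℝ) < (m.factorial : ℝ) := by positivity
    field_simp
    try ring
  -- sum computation
  have hsum : ∑ j ∈ Finset.range k, a j
      = β / k + (m : ℝ) - β * ∑ j ∈ Finset.range m, (1:ℝ)/((j:ℝ)+1) := by
    rw [Finset.sum_range_succ' a m]
    simp only [ha_def, if_pos rfl]
    have : ∀ j ∈ Finset.range m, a (j+1) = 1 - β * (1/((j:ℝ)+1)) := by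
      intro j _
      simp only [ha_def, if_neg (Nat.succ_ne_zero j)]
      have : ((j:ℝ)+1) ≠ 0 := by positivity
      push_cast
      field_simp
    rw [Finset.sum_congr rfl this, Finset.sum_sub_distrib, ← Finset.mul_sum]
    simp
    try ring
  -- harmonic bound
  have hharm : Real.log ((m:ℝ) + 1) ≤ ∑ j ∈ Finset.range m, (1:ℝ)/((j:ℝ)+1) :=
    log_le_harmonic m
  -- key inequality on the mean
  have hlog : Real.log (((k:ℝ)+1) / (k:ℝ)^2)
      = Real.log ((k:ℝ)+1) - 2 * Real.log (k:ℝ) := by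
    rw [Real.log_div (by positivity) (by positivity), Real.log_pow]
    push_cast; ring
  have hmean : (∑ j ∈ Finset.range k, a j) / k
      ≤ 1 + (β * Real.log (((k : ℝ) + 1) / (k : ℝ) ^ 2) + β - 1) / (k : ℝ) := by
    rw [div_le_iff₀ hk0, hsum, hlog]
    have hkm : (k:ℝ) = (m:ℝ) + 1 := by rw [hkdef]; push_cast; ring
    have hlogmono : Real.log ((k:ℝ)) ≤ Real.log ((k:ℝ)+1) :=
      Real.log_le_log (by positivity) (by linarith)
    have h1k : 1/(k:ℝ) ≤ 1 := by
      rw [div_le_one hk0]; linarith [hkm, (by exact_mod_cast hm : (1:ℝ) ≤ m)]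
    -- β/k + m - β*H ≤ (1 + (β*(log(k+1) - 2 log k) + β - 1)/k) * k
    have hrhs : (1 + (β * (Real.log ((k:ℝ)+1) - 2 * Real.log (k:ℝ)) + β - 1) / (k:ℝ)) * (k:ℝ)
        = (k:ℝ) + β * Real.log ((k:ℝ)+1) - 2 * β * Real.log (k:ℝ) + β - 1 := by
      field_simp; ring
    rw [hrhs]
    -- Using H ≥ log k  (note H here is H_m, log (m+1) = log k)
    have hH : β * Real.log ((k:ℝ)) ≤ β * ∑ j ∈ Finset.range m, (1:ℝ)/((j:ℝ)+1) := by
      apply mul_le_mul_of_nonneg_left _ (le_of_lt hβ0)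
      rw [hkm]; exact hharm
    -- need: β/k + m - β H ≤ k + β log(k+1) - 2β log k + β - 1
    -- i.e. β/k ≤ β H - β log k + β(log(k+1) - log k) + β
    have hβk : β / (k:ℝ) ≤ β := by
      calc β / (k:ℝ) = β * (1/(k:ℝ)) := by ring
        _ ≤ β * 1 := mul_le_mul_of_nonneg_left h1k (le_of_lt hβ0)
        _ = β := by ring
    have hlog2 : 0 ≤ β * (Real.log ((k:ℝ)+1) - Real.log ((k:ℝ))) := by
      apply mul_nonneg (le_of_lt hβ0); linarith
    have hkm' : (m:ℝ) = (k:ℝ) - 1 := by linarith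
    nlinarith [hH, hβk, hlog2]
  have hSnn : 0 ≤ (∑ j ∈ Finset.range k, a j) / k :=
    div_nonneg (Finset.sum_nonneg ha) (le_of_lt hk0)
  calc |genBinom β k| = ∏ j ∈ Finset.range k, a j := hprodeq
    _ ≤ ((∑ j ∈ Finset.range k, a j) / k) ^ k := amgm k (by omega) a ha
    _ ≤ (1 + (β * Real.log (((k : ℝ) + 1) / (k : ℝ) ^ 2) + β - 1) / (k : ℝ)) ^ k :=
        pow_le_pow_left₀ hSnn hmean k
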